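/- Let σ > 0 and define φ(ζ) = √(2/π) · ∫₀^{ζ/(2σ)} exp(-t²/2) dt. If r₁₁, r₂₂ > 0 and δ·r₁₁² > r₁₂² + r₂₂² for some δ ∈ (1/4, 1], then with s₁₁ = √(r₁₂² + r₂₂²) and s₂₂ = r₁₁r₂₂/√(r₁₂² + r₂₂²), we have φ(r₁₁)·φ(r₂₂) ≤ φ(s₁₁)·φ(s₂₂), with equality if and only if r₁₂ = 0. -/

import Mathlib

noncomputable def phi (σ ζ : ℝ) : ℝ :=
  Real.sqrt (2/Real.pi) * ∫ t in (0:ℝ)..(ζ/(2*σ)), Real.exp (-t^2/2)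

noncomputable def psi (x : ℝ) : ℝ := ∫ t in (0:ℝ)..x, Real.exp (-t^2/2)

lemma cont_e : Continuous fun t : ℝ => Real.exp (-t^2/2) := by fun_prop

lemma psi_hasDeriv (x : ℝ) : HasDerivAt psi (Real.exp (-x^2/2)) x :=
  intervalIntegral.integral_hasDerivAt_right
    (cont_e.intervalIntegrable _ _)
    (cont_e.stronglyMeasurableAtFilter _ _)
    cont_e.continuousAt

lemma psi_cont : Continuous psi :=
  continuous_iff_continuousAt.2 fun x => (psi_hasDeriv x).continuousAt

lemma psi_mono : StrictMono psi := by
  apply strictMono_of_deriv_pos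
  intro x
  rw [(psi_hasDeriv x).deriv]
  positivity

lemma psi_zero : psi 0 = 0 := intervalIntegral.integral_same

lemma psi_pos {x : ℝ} (hx : 0 < x) : 0 < psi x := by
  have := psi_mono hx
  rwa [psi_zero] at this

-- H lemma
lemma H_pos {x : ℝ} (hx : 0 < x) :
    (1 - x^2) * psi x < x * Real.exp (-x^2/2) := by
  set H : ℝ → ℝ := fun y => y * Real.exp (-y^2/2) - (1 - y^2) * psi y with hH
  have hderiv : ∀ y : ℝ, HasDerivAt H (2 * y * psi y) y := by
    intro y
    have he : HasDerivAt (fun y : ℝ => Real.exp (-y^2/2)) (Real.exp (-y^2/2) * (-y)) y := by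
      have hinner : HasDerivAt (fun y : ℝ => -y^2/2) (-y) y := by
        have : HasDerivAt (fun y : ℝ => y^2) (2*y) y := by
          simpa using (hasDerivAt_pow 2 y)
        exact ((this.neg).div_const 2).congr_deriv (by ring)
      exact hinner.exp
    have h1 : HasDerivAt (fun y : ℝ => y * Real.exp (-y^2/2))
        (1 * Real.exp (-y^2/2) + y * (Real.exp (-y^2/2) * (-y))) y :=
      (hasDerivAt_id y).mul he
    have h2 : HasDerivAt (fun y : ℝ => (1 - y^2) * psi y)
        ((0 - 2*y) * psi y + (1 - y^2) * Real.exp (-y^2/2)) y := by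
      have hq : HasDerivAt (fun y : ℝ => 1 - y^2) (0 - 2*y) y := by
        have : HasDerivAt (fun y : ℝ => y^2) (2*y) y := by
          simpa using (hasDerivAt_pow 2 y)
        exact (hasDerivAt_const y 1).sub this
      exact hq.mul (psi_hasDeriv y)
    exact (h1.sub h2).congr_deriv (by ring)
  have hmono : StrictMonoOn H (Set.Ici 0) := by
    apply strictMonoOn_of_deriv_pos (convex_Ici 0)
      (fun y _ => ((hderiv y).continuousAt).continuousWithinAt)
    intro y hy
    rw [interior_Ici] at hy
    rw [(hderiv y).deriv]
    have hy' : (0:ℝ) < y := hy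
    have := psi_pos hy'
    positivity
  have := hmono (Set.self_mem_Ici) (Set.mem_Ici.2 hx.le) hx
  have hH0 : H 0 = 0 := by simp [hH, psi_zero]
  rw [hH0] at this
  simp only [hH] at this
  linarith

-- cross lemma
lemma cross {x y : ℝ} (hx : 0 < x) (hxy : x < y) :
    y * Real.exp (-y^2/2) * psi x < x * Real.exp (-x^2/2) * psi y := by
  set K : ℝ → ℝ := fun y => x * Real.exp (-x^2/2) * psi y - y * Real.exp (-y^2/2) * psi x with hK
  have hderiv : ∀ z : ℝ, HasDerivAt K
      (x * Real.exp (-x^2/2) * Real.exp (-z^2/2)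
        - (1 - z^2) * Real.exp (-z^2/2) * psi x) z := by
    intro z
    have he : HasDerivAt (fun z : ℝ => Real.exp (-z^2/2)) (Real.exp (-z^2/2) * (-z)) z := by
      have hinner : HasDerivAt (fun z : ℝ => -z^2/2) (-z) z := by
        have : HasDerivAt (fun z : ℝ => z^2) (2*z) z := by
          simpa using (hasDerivAt_pow 2 z)
        exact ((this.neg).div_const 2).congr_deriv (by ring)
      exact hinner.exp
    have h1 : HasDerivAt (fun z : ℝ => x * Real.exp (-x^2/2) * psi z)
        (x * Real.exp (-x^2/2) * Real.exp (-z^2/2)) z :=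
      (psi_hasDeriv z).const_mul _
    have h2 : HasDerivAt (fun z : ℝ => z * Real.exp (-z^2/2) * psi x)
        ((1 * Real.exp (-z^2/2) + z * (Real.exp (-z^2/2) * (-z))) * psi x) z :=
      ((hasDerivAt_id z).mul he).mul_const _
    exact (h1.sub h2).congr_deriv (by ring)
  have hmono : StrictMonoOn K (Set.Ici x) := by
    apply strictMonoOn_of_deriv_pos (convex_Ici x)
      (fun z _ => ((hderiv z).continuousAt).continuousWithinAt)
    intro z hz
    rw [interior_Ici] at hz
    rw [(hderiv z).deriv]
    have hzx : x < z := hz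
    have h1 : (1 - x^2) * psi x < x * Real.exp (-x^2/2) := H_pos hx
    have h2 : (1 - z^2) * psi x ≤ (1 - x^2) * psi x := by
      have : 1 - z^2 ≤ 1 - x^2 := by nlinarith
      exact mul_le_mul_of_nonneg_right this (psi_pos hx).le
    have hez : 0 < Real.exp (-z^2/2) := Real.exp_pos _
    nlinarith
  have := hmono (Set.self_mem_Ici) (Set.mem_Ici.2 hxy.le) hxy
  have hK0 : K x = 0 := by simp only [hK]; ring
  rw [hK0] at this
  simp only [hK] at this
  linarith

-- F strictly increasing up to sqrt P
lemma F_mono {P : ℝ} (hP : 0 < P) :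
    StrictMonoOn (fun s => psi s * psi (P/s)) (Set.Ioc 0 (Real.sqrt P)) := by
  have hderiv : ∀ s : ℝ, 0 < s → HasDerivAt (fun s => psi s * psi (P/s))
      ((s * Real.exp (-s^2/2) * psi (P/s) - (P/s) * Real.exp (-(P/s)^2/2) * psi s) / s) s := by
    intro s hs
    have hinv : HasDerivAt (fun s : ℝ => P / s) (-(P / s^2)) s := by
      have := (hasDerivAt_inv (ne_of_gt hs)).const_mul P
      exact this.congr_deriv (by field_simp)
    have hcomp : HasDerivAt (fun s : ℝ => psi (P/s))
        (Real.exp (-(P/s)^2/2) * (-(P / s^2))) s :=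
      (psi_hasDeriv (P/s)).comp s hinv
    have := (psi_hasDeriv s).mul hcomp
    exact this.congr_deriv (by field_simp; ring)
  apply strictMonoOn_of_deriv_pos (convex_Ioc 0 (Real.sqrt P))
  · intro s hs
    exact ((hderiv s hs.1).continuousAt).continuousWithinAt
  · intro s hs
    rw [interior_Ioc] at hs
    obtain ⟨hs0, hsP⟩ := hs
    rw [(hderiv s hs0).deriv]
    apply div_pos _ hs0
    have hsP2 : s^2 < P := by
      exact (Real.lt_sqrt (le_of_lt hs0)).1 hsP
    have hslt : s < P / s := by
      rw [lt_div_iff₀ hs0]; nlinarith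
    have := cross hs0 hslt
    linarith

lemma psi_core {A B S : ℝ} (hB : 0 < B) (hBS : B < S) (hSA : S < A) :
    psi A * psi B < psi S * psi (A*B/S) := by
  set P := A * B with hPdef
  have hS : 0 < S := hB.trans hBS
  have hA : 0 < A := hS.trans hSA
  have hP : 0 < P := mul_pos hA hB
  have hFB : psi B * psi (P/B) = psi A * psi B := by
    rw [hPdef, mul_div_assoc, div_self (ne_of_gt hB), mul_one, mul_comm]
  have hBsq : B < Real.sqrt P := by
    rw [show P = A*B from rfl]
    rw [Real.lt_sqrt hB.le]
    nlinarith
  rcases le_or_gt S (Real.sqrt P) with hc | hc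
  · have := F_mono hP (Set.mem_Ioc.2 ⟨hB, hBsq.le⟩) (Set.mem_Ioc.2 ⟨hS, hc⟩) hBS
    simp only at this
    rw [hFB] at this
    exact this
  · have hS' : P / S < Real.sqrt P := by
      rw [div_lt_iff₀ hS]
      nlinarith [Real.sq_sqrt hP.le, Real.sqrt_pos.2 hP, mul_lt_mul_of_pos_left hc (Real.sqrt_pos.2 hP)]
    have hBS' : B < P / S := by
      rw [lt_div_iff₀ hS, hPdef]
      nlinarith
    have := F_mono hP (Set.mem_Ioc.2 ⟨hB, hBsq.le⟩) (Set.mem_Ioc.2 ⟨hB.trans hBS', hS'.le⟩) hBS'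
    simp only at this
    rw [hFB] at this
    have hPS : P / (P / S) = S := by field_simp
    rw [hPS] at this
    linarith [this, mul_comm (psi (P/S)) (psi S)]

lemma phi_eq (σ ζ : ℝ) : phi σ ζ = Real.sqrt (2/Real.pi) * psi (ζ/(2*σ)) := rfl

lemma phi_core {σ a b s : ℝ} (hσ : 0 < σ) (hb : 0 < b) (hbs : b < s) (hsa : s < a) :
    phi σ a * phi σ b < phi σ s * phi σ (a*b/s) := by
  have hc : (0:ℝ) < 2*σ := by linarith
  have hkey : psi (a/(2*σ)) * psi (b/(2*σ)) < psi (s/(2*σ)) * psi ((a/(2*σ))*(b/(2*σ))/(s/(2*σ))) := by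
    apply psi_core (by positivity) (by gcongr) (by gcongr)
  have harg : (a/(2*σ))*(b/(2*σ))/(s/(2*σ)) = (a*b/s)/(2*σ) := by
    have hσ0 : σ ≠ 0 := hσ.ne'
    have hs0 : s ≠ 0 := (hb.trans hbs).ne'
    field_simp
  rw [harg] at hkey
  have hC : 0 < Real.sqrt (2/Real.pi) := Real.sqrt_pos.2 (by positivity)
  simp only [phi_eq]
  calc Real.sqrt (2/Real.pi) * psi (a/(2*σ)) * (Real.sqrt (2/Real.pi) * psi (b/(2*σ)))
      = Real.sqrt (2/Real.pi)^2 * (psi (a/(2*σ)) * psi (b/(2*σ))) := by ring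
    _ < Real.sqrt (2/Real.pi)^2 * (psi (s/(2*σ)) * psi ((a*b/s)/(2*σ))) := by
        apply mul_lt_mul_of_pos_left hkey (by positivity)
    _ = Real.sqrt (2/Real.pi) * psi (s/(2*σ)) * (Real.sqrt (2/Real.pi) * psi ((a*b/s)/(2*σ))) := by ring

theorem stmt7 (σ r₁₁ r₁₂ r₂₂ δ : ℝ) (hσ : 0 < σ)
    (h₁₁ : 0 < r₁₁) (h₂₂ : 0 < r₂₂)
    (hδ₁ : 1/4 < δ) (hδ₂ : δ ≤ 1) (hlov : δ * r₁₁^2 > r₁₂^2 + r₂₂^2) :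
    phi σ r₁₁ * phi σ r₂₂ ≤
      phi σ (Real.sqrt (r₁₂^2 + r₂₂^2)) *
        phi σ (r₁₁ * r₂₂ / Real.sqrt (r₁₂^2 + r₂₂^2)) ∧
    (phi σ r₁₁ * phi σ r₂₂ =
      phi σ (Real.sqrt (r₁₂^2 + r₂₂^2)) *
        phi σ (r₁₁ * r₂₂ / Real.sqrt (r₁₂^2 + r₂₂^2)) ↔ r₁₂ = 0) := by
  rcases eq_or_ne r₁₂ 0 with h0 | h0
  · subst h0
    have hs : Real.sqrt ((0:ℝ)^2 + r₂₂^2) = r₂₂ := by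
      rw [show (0:ℝ)^2 + r₂₂^2 = r₂₂^2 by ring, Real.sqrt_sq h₂₂.le]
    rw [hs, mul_div_assoc, div_self (ne_of_gt h₂₂), mul_one]
    exact ⟨le_of_eq (mul_comm _ _), ⟨fun _ => rfl, fun _ => mul_comm _ _⟩⟩
  · have hstrict : phi σ r₁₁ * phi σ r₂₂ <
        phi σ (Real.sqrt (r₁₂^2 + r₂₂^2)) *
          phi σ (r₁₁ * r₂₂ / Real.sqrt (r₁₂^2 + r₂₂^2)) := by
      apply phi_core hσ h₂₂
      · rw [show r₂₂ = Real.sqrt (r₂₂^2) from (Real.sqrt_sq h₂₂.le).symm]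
        apply Real.sqrt_lt_sqrt (by positivity)
        have : 0 < r₁₂^2 := by positivity
        rw [Real.sqrt_sq h₂₂.le]
        nlinarith
      · rw [show r₁₁ = Real.sqrt (r₁₁^2) from (Real.sqrt_sq h₁₁.le).symm]
        apply Real.sqrt_lt_sqrt (by positivity)
        nlinarith
    exact ⟨hstrict.le, ⟨fun h => absurd h (ne_of_lt hstrict), fun h => absurd h h0⟩⟩
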